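/- For every integer $n \geq 2$, the identity $\sum_{\theta=1}^{n-1} \frac{1}{\sin^4(\pi\theta/n)} = \frac{(n^2-1)(n^2+11)}{45}$ holds. -/

import Mathlib

open Real

/-!
STATEMENT 9: For every integer `n ≥ 2`,
`∑_{θ=1}^{n-1} 1/sin⁴(πθ/n) = (n² - 1)(n² + 11)/45`.
-/

section CscPowFourAux

open Finset

private lemma tel1 (z : ℂ) (n : ℕ) :
    (1 - z) * ∑ k ∈ range n, ((k:ℂ)+1) * z^k = (∑ k ∈ range n, z^k) - n * z^n := by
  induction n with
  | zero => simp
  | succ m ih => rw [sum_range_succ, sum_range_succ]; push_cast; linear_combination ih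

private lemma tel2 (z : ℂ) (n : ℕ) :
    (1 - z) * ∑ k ∈ range n, ((k:ℂ)+1)*((k:ℂ)+2)/2 * z^k
      = (∑ k ∈ range n, ((k:ℂ)+1) * z^k) - (n*(n+1)/2) * z^n := by
  induction n with
  | zero => simp
  | succ m ih => rw [sum_range_succ, sum_range_succ]; push_cast; linear_combination ih

private lemma tel3 (z : ℂ) (n : ℕ) :
    (1 - z) * ∑ k ∈ range n, ((k:ℂ)+1)*((k:ℂ)+2)*((k:ℂ)+3)/6 * z^k
      = (∑ k ∈ range n, ((k:ℂ)+1)*((k:ℂ)+2)/2 * z^k) - (n*(n+1)*(n+2)/6) * z^n := by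
  induction n with
  | zero => simp
  | succ m ih => rw [sum_range_succ, sum_range_succ]; push_cast; linear_combination ih

private lemma tel4 (z : ℂ) (n : ℕ) :
    (1 - z) * ∑ k ∈ range n, ((k:ℂ)+1)*((k:ℂ)+2)*((k:ℂ)+3)*((k:ℂ)+4)/24 * z^k
      = (∑ k ∈ range n, ((k:ℂ)+1)*((k:ℂ)+2)*((k:ℂ)+3)/6 * z^k)
        - (n*(n+1)*(n+2)*(n+3)/24) * z^n := by
  induction n with
  | zero => simp
  | succ m ih => rw [sum_range_succ, sum_range_succ]; push_cast; linear_combination ih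

private lemma hock1 (n : ℕ) : ∑ k ∈ range n, ((k:ℂ)+1) = n*(n+1)/2 := by
  induction n with
  | zero => simp
  | succ m ih => rw [sum_range_succ]; push_cast; linear_combination ih

private lemma hock2 (n : ℕ) : ∑ k ∈ range n, ((k:ℂ)+1)*((k:ℂ)+2)/2 = n*(n+1)*(n+2)/6 := by
  induction n with
  | zero => simp
  | succ m ih => rw [sum_range_succ]; push_cast; linear_combination ih

private lemma hock3 (n : ℕ) :
    ∑ k ∈ range n, ((k:ℂ)+1)*((k:ℂ)+2)*((k:ℂ)+3)/6 = n*(n+1)*(n+2)*(n+3)/24 := by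
  induction n with
  | zero => simp
  | succ m ih => rw [sum_range_succ]; push_cast; linear_combination ih

private lemma hock4 (n : ℕ) :
    ∑ k ∈ range n, ((k:ℂ)+1)*((k:ℂ)+2)*((k:ℂ)+3)*((k:ℂ)+4)/24
      = n*(n+1)*(n+2)*(n+3)*(n+4)/120 := by
  induction n with
  | zero => simp
  | succ m ih => rw [sum_range_succ]; push_cast; linear_combination ih

private lemma aux_pow (n θ : ℕ) (hn : n ≠ 0) :
    Complex.exp (2*π*Complex.I*θ/n) ^ n = 1 := by
  have hn0 : (n:ℂ) ≠ 0 := Nat.cast_ne_zero.mpr hn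
  rw [← Complex.exp_nat_mul,
    show (n:ℂ) * (2*π*Complex.I*θ/n) = θ * (2*π*Complex.I) by field_simp]
  exact Complex.exp_nat_mul_two_pi_mul_I θ

private lemma aux_pow_pow (n θ k : ℕ) :
    Complex.exp (2*π*Complex.I*θ/n) ^ k = Complex.exp (2*π*Complex.I*k/n) ^ θ := by
  rw [← Complex.exp_nat_mul, ← Complex.exp_nat_mul]; congr 1; ring

private lemma aux_ne_one (n k : ℕ) (h1 : 1 ≤ k) (h2 : k < n) :
    Complex.exp (2*π*Complex.I*k/n) ≠ 1 := by
  intro h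
  rw [Complex.exp_eq_one_iff] at h
  obtain ⟨m, hm⟩ := h
  have hn0 : (n:ℂ) ≠ 0 := Nat.cast_ne_zero.mpr (by omega)
  have hI : (2*(π:ℂ)*Complex.I) ≠ 0 := by simp [Real.pi_ne_zero, Complex.I_ne_zero]
  have hk : (k:ℂ) = m * n := by
    field_simp at hm
    apply mul_left_cancel₀ hI
    linear_combination (2*(π:ℂ)*Complex.I) * hm
  have hkz : (k:ℤ) = m * n := by exact_mod_cast hk
  have hnn : (0:ℤ) < n := by exact_mod_cast Nat.pos_of_ne_zero (by omega)
  have h1' : (1:ℤ) ≤ k := by exact_mod_cast h1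
  have h2' : (k:ℤ) < n := by exact_mod_cast h2
  rcases le_or_gt m 0 with hm0 | hm0
  · nlinarith
  · nlinarith

private lemma horth (n : ℕ) (hn : n ≠ 0) (k : ℕ) (hk : k < n) :
    ∑ θ ∈ range n, Complex.exp (2*π*Complex.I*θ/n) ^ k
      = if k = 0 then (n:ℂ) else 0 := by
  rcases eq_or_ne k 0 with rfl | hk0
  · simp
  · simp only [hk0, if_false]
    calc ∑ θ ∈ range n, Complex.exp (2*π*Complex.I*θ/n) ^ k
        = ∑ θ ∈ range n, Complex.exp (2*π*Complex.I*k/n) ^ θ :=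
          Finset.sum_congr rfl fun θ _ => aux_pow_pow n θ k
      _ = (Complex.exp (2*π*Complex.I*k/n) ^ n - 1) / (Complex.exp (2*π*Complex.I*k/n) - 1) :=
          geom_sum_eq (aux_ne_one n k (by omega) hk) n
      _ = 0 := by rw [aux_pow n k hn]; simp

private lemma sin_rel (n θ : ℕ) :
    ((Real.sin (π * θ / n) : ℝ) : ℂ)^2 * (4 * Complex.exp (2*π*Complex.I*θ/n))
      = -(1 - Complex.exp (2*π*Complex.I*θ/n))^2 := by
  set t : ℝ := 2 * π * θ / n with ht
  have he : Complex.exp (2*π*Complex.I*θ/n) = (Real.cos t : ℂ) + (Real.sin t : ℂ) * Complex.I := by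
    rw [show (2*(π:ℂ)*Complex.I*θ/n) = (t:ℂ) * Complex.I by rw [ht]; push_cast; ring,
      Complex.exp_mul_I, Complex.ofReal_cos, Complex.ofReal_sin]
  have hs2 : ((Real.sin (π * θ / n) : ℝ) : ℂ)^2 = 1/2 - (Real.cos t : ℂ)/2 := by
    have h : Real.sin (π * θ / n) ^ 2 = 1/2 - Real.cos t / 2 := by
      rw [Real.sin_sq, Real.cos_sq (π * θ / n), show 2 * (π * θ / n) = t by rw [ht]; ring]
      ring
    rw [← Complex.ofReal_pow, h]; push_cast; ring
  have hCS : (Real.sin t : ℂ)^2 + (Real.cos t : ℂ)^2 = 1 := by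
    exact_mod_cast Real.sin_sq_add_cos_sq t
  rw [he, hs2]
  linear_combination (-1:ℂ) * hCS + ((Real.sin t : ℂ))^2 * Complex.I_sq

private lemma sum_Icc_eval (n : ℕ) (hn : 2 ≤ n) (e : ℕ → ℂ) (c : ℕ → ℂ)
    (hT : ∀ k ∈ Finset.range n,
      ∑ θ ∈ Finset.Icc 1 (n-1), e θ ^ k = (if k = 0 then (n:ℂ) else 0) - 1) :
    ∑ θ ∈ Finset.Icc 1 (n-1), ∑ k ∈ Finset.range n, c k * e θ ^ k
      = c 0 * n - ∑ k ∈ Finset.range n, c k := by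
  rw [Finset.sum_comm]
  have h0 : (0:ℕ) ∈ Finset.range n := by simp; omega
  calc ∑ k ∈ Finset.range n, ∑ θ ∈ Finset.Icc 1 (n-1), c k * e θ ^ k
      = ∑ k ∈ Finset.range n, c k * ((if k = 0 then (n:ℂ) else 0) - 1) := by
        refine Finset.sum_congr rfl fun k hk => ?_
        rw [← Finset.mul_sum, hT k hk]
    _ = ∑ k ∈ Finset.range n, ((if k = 0 then c k * n else 0) - c k) := by
        refine Finset.sum_congr rfl fun k _ => ?_
        by_cases h : k = 0 <;> simp [h] <;> try ring
    _ = c 0 * n - ∑ k ∈ Finset.range n, c k := by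
        rw [Finset.sum_sub_distrib, Finset.sum_ite_eq' (Finset.range n) 0 (fun k => c k * n)]
        simp [h0]

set_option maxHeartbeats 1000000 in
private lemma key (n θ : ℕ) (hn : 2 ≤ n) (hθ1 : 1 ≤ θ) (hθ2 : θ ≤ n - 1) :
    (n:ℂ) * (1 / ((Real.sin (π * θ / n) : ℝ) : ℂ)^4)
      = (-16) * (∑ k ∈ range n, ((k:ℂ)+1)*((k:ℂ)+2)*((k:ℂ)+3)*((k:ℂ)+4)/24
          * Complex.exp (2*π*Complex.I*θ/n) ^ k)
      + (8*((n:ℂ)+5)) * (∑ k ∈ range n, ((k:ℂ)+1)*((k:ℂ)+2)*((k:ℂ)+3)/6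
          * Complex.exp (2*π*Complex.I*θ/n) ^ k)
      + (-(4*((n:ℂ)^2+12*(n:ℂ)+23)/3)) * (∑ k ∈ range n, ((k:ℂ)+1)*((k:ℂ)+2)/2
          * Complex.exp (2*π*Complex.I*θ/n) ^ k)
      + (2*((n:ℂ)+1)*((n:ℂ)+3)) * (∑ k ∈ range n, ((k:ℂ)+1)
          * Complex.exp (2*π*Complex.I*θ/n) ^ k) := by
  have hnR : (0:ℝ) < n := by positivity
  have hθR : (0:ℝ) < θ := by exact_mod_cast Nat.pos_of_ne_zero (by omega)
  have hθn : (θ:ℝ) < n := by exact_mod_cast (by omega : θ < n)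
  have hsin_pos : 0 < Real.sin (π * θ / n) := by
    apply Real.sin_pos_of_pos_of_lt_pi
    · positivity
    · rw [div_lt_iff₀ hnR]; nlinarith [Real.pi_pos]
  have hs0 : Real.sin (π * θ / n) ≠ 0 := ne_of_gt hsin_pos
  set z := Complex.exp (2*π*Complex.I*θ/n) with hzdef
  have hsr := sin_rel n θ
  rw [← hzdef] at hsr
  have hz0 : z ≠ 0 := Complex.exp_ne_zero _
  have hz1 : z ≠ 1 := by
    intro h
    have h3 : ((Real.sin (π * θ / n) : ℝ) : ℂ)^2 = 0 := by
      rw [h] at hsr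
      linear_combination hsr / 4
    exact hs0 (by exact_mod_cast pow_eq_zero_iff (n := 2) (by norm_num) |>.mp h3)
  have hu : (1:ℂ) - z ≠ 0 := sub_ne_zero.mpr (Ne.symm hz1)
  have hpn : z ^ n = 1 := aux_pow n θ (by omega)
  have hgeom : ∑ k ∈ range n, z^k = 0 := by
    rw [geom_sum_eq hz1, hpn]; simp
  have r1 := tel1 z n
  rw [hpn, hgeom] at r1
  have r2 := tel2 z n; rw [hpn] at r2
  have r3 := tel3 z n; rw [hpn] at r3
  have r4 := tel4 z n; rw [hpn] at r4
  have hsin4 : ((Real.sin (π * θ / n) : ℝ) : ℂ)^4 = (1-z)^4 / (16 * z^2) := by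
    rw [eq_div_iff (by intro h; simp [hz0] at h)]
    linear_combination (((Real.sin (π * θ / n) : ℝ) : ℂ)^2 * (4 * z) - (1-z)^2) * hsr
  rw [hsin4]
  set A1 := ∑ k ∈ range n, ((k:ℂ)+1) * z^k with hA1d
  set A2 := ∑ k ∈ range n, ((k:ℂ)+1)*((k:ℂ)+2)/2 * z^k with hA2d
  set A3 := ∑ k ∈ range n, ((k:ℂ)+1)*((k:ℂ)+2)*((k:ℂ)+3)/6 * z^k with hA3d
  set A4 := ∑ k ∈ range n, ((k:ℂ)+1)*((k:ℂ)+2)*((k:ℂ)+3)*((k:ℂ)+4)/24 * z^k with hA4d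
  have main4 : (n:ℂ) * (16 * z^2)
      = ((-16) * A4 + (8*((n:ℂ)+5)) * A3 + (-(4*((n:ℂ)^2+12*(n:ℂ)+23)/3)) * A2
          + (2*((n:ℂ)+1)*((n:ℂ)+3)) * A1) * (1-z)^4 := by
    linear_combination (-((-16:ℂ)*(1-z)^3)) * r4
      + (-((-16:ℂ)*(1-z)^2 + 8*((n:ℂ)+5)*(1-z)^3)) * r3
      + (-((-16:ℂ)*(1-z) + 8*((n:ℂ)+5)*(1-z)^2 + (-(4*((n:ℂ)^2+12*(n:ℂ)+23)/3))*(1-z)^3)) * r2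
      + (-((-16:ℂ) + 8*((n:ℂ)+5)*(1-z) + (-(4*((n:ℂ)^2+12*(n:ℂ)+23)/3))*(1-z)^2
          + (2*((n:ℂ)+1)*((n:ℂ)+3))*(1-z)^3)) * r1
  rw [one_div_div, mul_div_assoc', div_eq_iff (pow_ne_zero 4 hu)]
  linear_combination main4

end CscPowFourAux

open Finset in
set_option maxHeartbeats 1000000 in
theorem csc_pow_four_sum (n : ℕ) (hn : 2 ≤ n) :
    ∑ θ ∈ Finset.Icc 1 (n - 1), 1 / Real.sin (π * θ / n) ^ 4
      = ((n : ℝ) ^ 2 - 1) * ((n : ℝ) ^ 2 + 11) / 45 := by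
  have hn' : n ≠ 0 := by omega
  have hn0 : (n:ℂ) ≠ 0 := Nat.cast_ne_zero.mpr hn'
  have hIcc : Finset.Icc 1 (n-1) = (Finset.range n).erase 0 := by
    ext x
    simp only [Finset.mem_Icc, Finset.mem_erase, Finset.mem_range]
    omega
  have hT : ∀ k ∈ Finset.range n,
      ∑ θ ∈ Finset.Icc 1 (n-1), Complex.exp (2*π*Complex.I*θ/n) ^ k
        = (if k = 0 then (n:ℂ) else 0) - 1 := by
    intro k hk
    rw [hIcc, Finset.sum_erase_eq_sub (by simp only [Finset.mem_range]; omega),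
      horth n hn' k (Finset.mem_range.mp hk)]
    norm_num
  have S1 := sum_Icc_eval n hn (fun θ => Complex.exp (2*π*Complex.I*θ/n))
      (fun k => ((k:ℂ)+1)) hT
  have S2 := sum_Icc_eval n hn (fun θ => Complex.exp (2*π*Complex.I*θ/n))
      (fun k => ((k:ℂ)+1)*((k:ℂ)+2)/2) hT
  have S3 := sum_Icc_eval n hn (fun θ => Complex.exp (2*π*Complex.I*θ/n))
      (fun k => ((k:ℂ)+1)*((k:ℂ)+2)*((k:ℂ)+3)/6) hT
  have S4 := sum_Icc_eval n hn (fun θ => Complex.exp (2*π*Complex.I*θ/n))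
      (fun k => ((k:ℂ)+1)*((k:ℂ)+2)*((k:ℂ)+3)*((k:ℂ)+4)/24) hT
  rw [hock1] at S1
  rw [hock2] at S2
  rw [hock3] at S3
  rw [hock4] at S4
  norm_num at S1 S2 S3 S4
  have hC : ((∑ θ ∈ Finset.Icc 1 (n - 1), 1 / Real.sin (π * θ / n) ^ 4 : ℝ) : ℂ)
      = ((((n : ℝ) ^ 2 - 1) * ((n : ℝ) ^ 2 + 11) / 45 : ℝ) : ℂ) := by
    apply mul_left_cancel₀ hn0
    calc (n:ℂ) * ((∑ θ ∈ Finset.Icc 1 (n - 1), 1 / Real.sin (π * θ / n) ^ 4 : ℝ) : ℂ)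
        = ∑ θ ∈ Finset.Icc 1 (n-1), (n:ℂ) * (1 / ((Real.sin (π * θ / n) : ℝ) : ℂ)^4) := by
          rw [Complex.ofReal_sum, Finset.mul_sum]
          refine Finset.sum_congr rfl fun θ hθ => ?_
          norm_cast
      _ = ∑ θ ∈ Finset.Icc 1 (n-1),
            ((-16) * (∑ k ∈ Finset.range n, ((k:ℂ)+1)*((k:ℂ)+2)*((k:ℂ)+3)*((k:ℂ)+4)/24
                * Complex.exp (2*π*Complex.I*θ/n) ^ k)
            + (8*((n:ℂ)+5)) * (∑ k ∈ Finset.range n, ((k:ℂ)+1)*((k:ℂ)+2)*((k:ℂ)+3)/6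
                * Complex.exp (2*π*Complex.I*θ/n) ^ k)
            + (-(4*((n:ℂ)^2+12*(n:ℂ)+23)/3)) * (∑ k ∈ Finset.range n, ((k:ℂ)+1)*((k:ℂ)+2)/2
                * Complex.exp (2*π*Complex.I*θ/n) ^ k)
            + (2*((n:ℂ)+1)*((n:ℂ)+3)) * (∑ k ∈ Finset.range n, ((k:ℂ)+1)
                * Complex.exp (2*π*Complex.I*θ/n) ^ k)) := by
          refine Finset.sum_congr rfl fun θ hθ => ?_
          exact key n θ hn (Finset.mem_Icc.mp hθ).1 (Finset.mem_Icc.mp hθ).2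
      _ = (-16) * (∑ θ ∈ Finset.Icc 1 (n-1), ∑ k ∈ Finset.range n,
              ((k:ℂ)+1)*((k:ℂ)+2)*((k:ℂ)+3)*((k:ℂ)+4)/24 * Complex.exp (2*π*Complex.I*θ/n) ^ k)
          + (8*((n:ℂ)+5)) * (∑ θ ∈ Finset.Icc 1 (n-1), ∑ k ∈ Finset.range n,
              ((k:ℂ)+1)*((k:ℂ)+2)*((k:ℂ)+3)/6 * Complex.exp (2*π*Complex.I*θ/n) ^ k)
          + (-(4*((n:ℂ)^2+12*(n:ℂ)+23)/3)) * (∑ θ ∈ Finset.Icc 1 (n-1), ∑ k ∈ Finset.range n,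
              ((k:ℂ)+1)*((k:ℂ)+2)/2 * Complex.exp (2*π*Complex.I*θ/n) ^ k)
          + (2*((n:ℂ)+1)*((n:ℂ)+3)) * (∑ θ ∈ Finset.Icc 1 (n-1), ∑ k ∈ Finset.range n,
              ((k:ℂ)+1) * Complex.exp (2*π*Complex.I*θ/n) ^ k) := by
          rw [Finset.sum_add_distrib, Finset.sum_add_distrib, Finset.sum_add_distrib,
            ← Finset.mul_sum, ← Finset.mul_sum, ← Finset.mul_sum, ← Finset.mul_sum]
      _ = (n:ℂ) * ((((n : ℝ) ^ 2 - 1) * ((n : ℝ) ^ 2 + 11) / 45 : ℝ) : ℂ) := by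
          rw [S1, S2, S3, S4]
          push_cast
          ring
  exact_mod_cast hC
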